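/- Let b ∈ ℝ with b ≠ 0, c > 0, q > 0, x0 ≥ 0, and let r be a natural number. Assume either (b > 0 and r < b·q) or (b < 0 and r < -b). Then the r-th moment of the IF1 distribution, ∫_{x0}^∞ x^r · (|b|q/c) · ((x-x0)/c)^(b-1) · (1 + ((x-x0)/c)^b)^(-q-1) dx, equals Σ_{i=0}^{r} binomial(r,i) · x0^i · c^(r-i) · Γ(q - (r-i)/b) · Γ(1 + (r-i)/b) / Γ(q). -/

import Mathlib

open MeasureTheory Real

lemma realBeta (s t : ℝ) (hs : 0 < s) (ht : 0 < t) :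
    IntegrableOn (fun y : ℝ => y ^ (s - 1) * (1 - y) ^ (t - 1)) (Set.Ioo 0 1) ∧
    ∫ y in Set.Ioo (0:ℝ) 1, y ^ (s - 1) * (1 - y) ^ (t - 1) =
      Real.Gamma s * Real.Gamma t / Real.Gamma (s + t) := by
  have hs' : 0 < Complex.re (s : ℂ) := by simpa using hs
  have ht' : 0 < Complex.re (t : ℂ) := by simpa using ht
  have hconv := Complex.betaIntegral_convergent hs' ht'
  have hIoc : IntegrableOn (fun x : ℝ => (x : ℂ) ^ ((s : ℂ) - 1) * ((1 : ℂ) - x) ^ ((t : ℂ) - 1))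
      (Set.Ioc (0:ℝ) 1) := by
    simpa [intervalIntegrable_iff, Set.uIoc_of_le (zero_le_one : (0:ℝ) ≤ 1)] using hconv
  have hIoo : IntegrableOn (fun x : ℝ => (x : ℂ) ^ ((s : ℂ) - 1) * ((1 : ℂ) - x) ^ ((t : ℂ) - 1))
      (Set.Ioo (0:ℝ) 1) := hIoc.mono_set Set.Ioo_subset_Ioc_self
  have heq : Set.EqOn (fun x : ℝ => (x : ℂ) ^ ((s : ℂ) - 1) * ((1 : ℂ) - x) ^ ((t : ℂ) - 1))
      (fun y : ℝ => ((y ^ (s - 1) * (1 - y) ^ (t - 1) : ℝ) : ℂ)) (Set.Ioo 0 1) := by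
    intro y hy
    obtain ⟨h0, h1⟩ := hy
    have h1' : (0:ℝ) ≤ 1 - y := by linarith
    simp only
    rw [Complex.ofReal_mul, Complex.ofReal_cpow h0.le, Complex.ofReal_cpow h1']
    push_cast
    ring
  have hint : IntegrableOn (fun y : ℝ => y ^ (s - 1) * (1 - y) ^ (t - 1)) (Set.Ioo 0 1) := by
    have h2 : IntegrableOn
        (fun x : ℝ => Complex.re ((x ^ (s - 1) * (1 - x) ^ (t - 1) : ℝ) : ℂ)) (Set.Ioo 0 1) :=
      (hIoo.congr_fun heq measurableSet_Ioo).re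
    exact h2.congr_fun (fun y _ => by simp) measurableSet_Ioo
  refine ⟨hint, ?_⟩
  have hbeta : Complex.betaIntegral (s : ℂ) (t : ℂ) =
      ((∫ y in Set.Ioo (0:ℝ) 1, y ^ (s - 1) * (1 - y) ^ (t - 1) : ℝ) : ℂ) := by
    rw [Complex.betaIntegral, intervalIntegral.integral_of_le (zero_le_one : (0:ℝ) ≤ 1),
      integral_Ioc_eq_integral_Ioo, setIntegral_congr_fun measurableSet_Ioo heq]
    exact integral_ofReal
  have key := Complex.Gamma_mul_Gamma_eq_betaIntegral hs' ht'
  rw [hbeta, show (s : ℂ) + (t : ℂ) = ((s + t : ℝ) : ℂ) by push_cast; ring,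
    Complex.Gamma_ofReal, Complex.Gamma_ofReal, Complex.Gamma_ofReal,
    ← Complex.ofReal_mul, ← Complex.ofReal_mul] at key
  have key' : Real.Gamma s * Real.Gamma t =
      Real.Gamma (s + t) * ∫ y in Set.Ioo (0:ℝ) 1, y ^ (s - 1) * (1 - y) ^ (t - 1) := by
    exact_mod_cast key
  have hne : Real.Gamma (s + t) ≠ 0 := (Real.Gamma_pos_of_pos (by positivity)).ne'
  field_simp [key']
  rw [key']; ring
lemma betaPrime (s t : ℝ) (hs : 0 < s) (ht : 0 < t) :
    IntegrableOn (fun u : ℝ => u ^ (s - 1) * (1 + u) ^ (-(s + t))) (Set.Ioi 0) ∧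
    ∫ u in Set.Ioi (0:ℝ), u ^ (s - 1) * (1 + u) ^ (-(s + t)) =
      Real.Gamma s * Real.Gamma t / Real.Gamma (s + t) := by
  set f : ℝ → ℝ := fun y => y / (1 - y) with hf
  have hderiv : ∀ y ∈ Set.Ioo (0:ℝ) 1,
      HasDerivWithinAt f (((1 - y) ^ 2)⁻¹) (Set.Ioo 0 1) y := by
    intro y hy
    have h1 : (1:ℝ) - y ≠ 0 := by have := hy.2; intro h; linarith [sub_eq_zero.mp h]
    have : HasDerivAt f ((1 * (1 - y) - y * (0 - 1)) / (1 - y) ^ 2) y := by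
      exact (hasDerivAt_id y).div ((hasDerivAt_const y (1:ℝ)).sub (hasDerivAt_id y)) h1
    exact (this.congr_deriv (by ring)).hasDerivWithinAt
  have hinj : Set.InjOn f (Set.Ioo 0 1) := by
    intro a ha b hb hab
    have ha1 : (1:ℝ) - a ≠ 0 := by have := ha.2; intro h; linarith [sub_eq_zero.mp h]
    have hb1 : (1:ℝ) - b ≠ 0 := by have := hb.2; intro h; linarith [sub_eq_zero.mp h]
    simp only [hf] at hab; field_simp at hab
    linarith
  have himg : f '' Set.Ioo 0 1 = Set.Ioi 0 := by
    ext u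
    simp only [Set.mem_image, Set.mem_Ioi, Set.mem_Ioo]
    constructor
    · rintro ⟨y, ⟨h0, h1⟩, rfl⟩
      exact div_pos h0 (by linarith)
    · intro hu
      refine ⟨u / (1 + u), ⟨div_pos hu (by linarith), ?_⟩, ?_⟩
      · rw [div_lt_one (by linarith)]; linarith
      · have h1u : (1:ℝ) + u ≠ 0 := by positivity
        simp only [hf]
        rw [show 1 - u / (1 + u) = 1 / (1 + u) by field_simp; ring]
        field_simp
  have hptwise : ∀ y ∈ Set.Ioo (0:ℝ) 1,
      |((1 - y) ^ 2)⁻¹| • ((f y) ^ (s - 1) * (1 + f y) ^ (-(s + t))) =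
        y ^ (s - 1) * (1 - y) ^ (t - 1) := by
    intro y hy
    obtain ⟨h0, h1⟩ := hy
    have h1y : (0:ℝ) < 1 - y := by linarith
    have hfy : 1 + f y = (1 - y)⁻¹ := by
      rw [hf]; field_simp; ring
    rw [smul_eq_mul, hfy, hf]
    simp only
    rw [div_rpow h0.le h1y.le, Real.inv_rpow h1y.le, ← Real.rpow_neg h1y.le,
      abs_of_pos (by positivity), ← Real.rpow_natCast (1 - y) 2, ← Real.rpow_neg h1y.le,
      neg_neg, div_eq_mul_inv, ← Real.rpow_neg h1y.le]
    rw [show t - 1 = -((2:ℕ):ℝ) + (-(s-1) + (s+t)) by push_cast; ring,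
      Real.rpow_add h1y, Real.rpow_add h1y]
    ring_nf
    rw [show (1:ℝ) + t = 1 - s + s + t by ring, Real.rpow_add h1y, Real.rpow_add h1y]
    ring
  obtain ⟨hbint, hbval⟩ := realBeta s t hs ht
  have hiff := integrableOn_image_iff_integrableOn_abs_deriv_smul measurableSet_Ioo hderiv hinj
    (fun u : ℝ => u ^ (s - 1) * (1 + u) ^ (-(s + t)))
  rw [himg] at hiff
  have heq := integral_image_eq_integral_abs_deriv_smul measurableSet_Ioo hderiv hinj
    (fun u : ℝ => u ^ (s - 1) * (1 + u) ^ (-(s + t)))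
  rw [himg] at heq
  constructor
  · rw [hiff]
    exact hbint.congr_fun (fun y hy => (hptwise y hy).symm) measurableSet_Ioo
  · rw [heq, setIntegral_congr_fun measurableSet_Ioo (fun y hy => hptwise y hy), hbval]
lemma if1_aux (b q k : ℝ) (hb : b ≠ 0) (hq : 0 < q)
    (h1 : 0 < 1 + k / b) (h2 : k / b < q) :
    IntegrableOn (fun t : ℝ => t ^ k * (|b| * q * t ^ (b - 1) * (1 + t ^ b) ^ (-q - 1)))
      (Set.Ioi 0) ∧
    ∫ t in Set.Ioi (0:ℝ), t ^ k * (|b| * q * t ^ (b - 1) * (1 + t ^ b) ^ (-q - 1)) =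
      Real.Gamma (q - k / b) * Real.Gamma (1 + k / b) / Real.Gamma q := by
  obtain ⟨hi, hv⟩ := betaPrime (1 + k / b) (q - k / b) h1 (by linarith)
  rw [show (1 + k / b) - 1 = k / b by ring, show -((1 + k / b) + (q - k / b)) = -q - 1 by ring]
    at hi hv
  rw [show (1 + k / b) + (q - k / b) = q + 1 by ring, Real.Gamma_add_one hq.ne'] at hv
  set g : ℝ → ℝ := fun u => q * (u ^ (k / b) * (1 + u) ^ (-q - 1)) with hg
  -- facts about the map t ↦ t ^ b on Ioi 0
  have a1 : ∀ x : ℝ, x ∈ Set.Ioi (0:ℝ) →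
      HasDerivWithinAt (fun t : ℝ => t ^ b) (b * x ^ (b - 1)) (Set.Ioi 0) x :=
    fun x hx => (Real.hasDerivAt_rpow_const (Or.inl (Set.mem_Ioi.mp hx).ne')).hasDerivWithinAt
  have a2 : Set.InjOn (fun x : ℝ => x ^ b) (Set.Ioi 0) := by
    rcases lt_or_gt_of_ne hb with (h | h)
    · apply StrictAntiOn.injOn
      intro x hx y hy hxy
      rw [← inv_lt_inv₀ (Real.rpow_pos_of_pos hx b) (Real.rpow_pos_of_pos hy b),
        ← Real.rpow_neg (le_of_lt hx), ← Real.rpow_neg (le_of_lt hy)]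
      exact Real.rpow_lt_rpow (le_of_lt hx) hxy (neg_pos.mpr h)
    · exact StrictMonoOn.injOn fun x hx y _ hxy =>
        Real.rpow_lt_rpow (Set.mem_Ioi.mp hx).le hxy h
  have a3 : (fun t : ℝ => t ^ b) '' Set.Ioi 0 = Set.Ioi 0 := by
    ext1 x; rw [Set.mem_image]; constructor
    · rintro ⟨y, hy, rfl⟩; exact Real.rpow_pos_of_pos hy b
    · intro hx; refine ⟨x ^ (1 / b), Real.rpow_pos_of_pos hx _, ?_⟩
      rw [← Real.rpow_mul (le_of_lt hx), one_div_mul_cancel hb, Real.rpow_one]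
  have hptwise : ∀ t ∈ Set.Ioi (0:ℝ),
      |b * t ^ (b - 1)| • g (t ^ b) =
        t ^ k * (|b| * q * t ^ (b - 1) * (1 + t ^ b) ^ (-q - 1)) := by
    intro t ht
    have ht' : (0:ℝ) < t := ht
    rw [smul_eq_mul, abs_mul, abs_of_nonneg (Real.rpow_nonneg ht'.le _), hg]
    simp only
    rw [← Real.rpow_mul ht'.le, show b * (k / b) = k by field_simp]
    ring
  have hgi : IntegrableOn g (Set.Ioi 0) := hi.const_mul q
  constructor
  · have := (integrableOn_image_iff_integrableOn_abs_deriv_smul measurableSet_Ioi a1 a2 g)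
    rw [a3] at this
    exact (this.mp hgi).congr_fun hptwise measurableSet_Ioi
  · rw [← setIntegral_congr_fun measurableSet_Ioi hptwise]
    have := integral_image_eq_integral_abs_deriv_smul measurableSet_Ioi a1 a2 g
    rw [a3] at this
    rw [← this, hg]
    rw [MeasureTheory.integral_const_mul, hv]
    field_simp
/-- The `r`-th moment of the IF1 distribution. -/
theorem if1_moment (b c q x0 : ℝ) (r : ℕ) (hb : b ≠ 0) (hc : 0 < c) (hq : 0 < q)
    (hx0 : 0 ≤ x0)
    (hcond : (0 < b ∧ (r : ℝ) < b * q) ∨ (b < 0 ∧ (r : ℝ) < -b)) :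
    ∫ x in Set.Ioi x0,
        x ^ r * (|b| * q / c * ((x - x0) / c) ^ (b - 1) *
          (1 + ((x - x0) / c) ^ b) ^ (-q - 1)) =
      ∑ i ∈ Finset.range (r + 1),
        (r.choose i : ℝ) * x0 ^ i * c ^ (r - i) *
          (Real.Gamma (q - ((r : ℝ) - i) / b) * Real.Gamma (1 + ((r : ℝ) - i) / b) /
            Real.Gamma q) := by
  have hc0 : c ≠ 0 := hc.ne'
  -- conditions for each k = r - i
  have hcondk : ∀ i : ℕ, i ∈ Finset.range (r + 1) →
      0 < 1 + ((r - i : ℕ) : ℝ) / b ∧ ((r - i : ℕ) : ℝ) / b < q := by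
    intro i hi
    have hir : i ≤ r := Nat.lt_succ_iff.mp (Finset.mem_range.mp hi)
    have hk0 : (0:ℝ) ≤ ((r - i : ℕ) : ℝ) := Nat.cast_nonneg _
    have hkr : ((r - i : ℕ) : ℝ) ≤ (r : ℝ) := by exact_mod_cast Nat.sub_le r i
    rcases hcond with ⟨hbpos, hrq⟩ | ⟨hbneg, hrb⟩
    · constructor
      · have := div_nonneg hk0 hbpos.le; linarith
      · rw [div_lt_iff₀ hbpos]; nlinarith
    · constructor
      · have : (-1 : ℝ) < ((r - i : ℕ) : ℝ) / b :=
          (lt_div_iff_of_neg hbneg).mpr (by linarith)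
        linarith
      · have : ((r - i : ℕ) : ℝ) / b ≤ 0 := div_nonpos_of_nonneg_of_nonpos hk0 hbneg.le
        linarith
  -- affine substitution x = x0 + c * t
  have a1 : ∀ t ∈ Set.Ioi (0:ℝ),
      HasDerivWithinAt (fun t : ℝ => x0 + c * t) c (Set.Ioi 0) t := by
    intro t _
    simpa using (((hasDerivAt_id t).const_mul c).const_add x0).hasDerivWithinAt
  have a2 : Set.InjOn (fun t : ℝ => x0 + c * t) (Set.Ioi 0) := by
    intro a _ b' _ h
    simp only at h
    exact mul_left_cancel₀ hc0 (by linarith : c * a = c * b')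
  have a3 : (fun t : ℝ => x0 + c * t) '' Set.Ioi 0 = Set.Ioi x0 := by
    ext x
    simp only [Set.mem_image, Set.mem_Ioi]
    constructor
    · rintro ⟨t, ht, rfl⟩; nlinarith
    · intro hx
      exact ⟨(x - x0) / c, div_pos (by linarith) hc, by field_simp; ring⟩
  have key := integral_image_eq_integral_abs_deriv_smul measurableSet_Ioi a1 a2
      (fun x => x ^ r * (|b| * q / c * ((x - x0) / c) ^ (b - 1) *
          (1 + ((x - x0) / c) ^ b) ^ (-q - 1)))
  rw [a3] at key
  rw [key]
  have hsimp : Set.EqOn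
      (fun t : ℝ => |c| • ((fun x => x ^ r * (|b| * q / c * ((x - x0) / c) ^ (b - 1) *
          (1 + ((x - x0) / c) ^ b) ^ (-q - 1))) (x0 + c * t)))
      (fun t : ℝ => ∑ i ∈ Finset.range (r + 1),
        (r.choose i : ℝ) * x0 ^ i * c ^ (r - i) *
          (t ^ (((r - i : ℕ) : ℝ)) *
            (|b| * q * t ^ (b - 1) * (1 + t ^ b) ^ (-q - 1)))) (Set.Ioi 0) := by
    intro t ht
    have ht' : (0:ℝ) < t := ht
    simp only
    have he : (x0 + c * t - x0) / c = t := by field_simp; ring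
    rw [he, smul_eq_mul, abs_of_pos hc, add_pow, Finset.sum_mul, Finset.mul_sum]
    refine Finset.sum_congr rfl fun i hi => ?_
    rw [mul_pow, Real.rpow_natCast]
    field_simp
  rw [setIntegral_congr_fun measurableSet_Ioi hsimp]
  rw [integral_finset_sum _ (fun i hi => by
    obtain ⟨h1, h2⟩ := hcondk i hi
    exact ((if1_aux b q _ hb hq h1 h2).1.const_mul _))]
  refine Finset.sum_congr rfl fun i hi => ?_
  have hir : i ≤ r := Nat.lt_succ_iff.mp (Finset.mem_range.mp hi)
  have hk : ((r - i : ℕ) : ℝ) = (r : ℝ) - i := by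
    rw [Nat.cast_sub hir]
  obtain ⟨h1, h2⟩ := hcondk i hi
  rw [MeasureTheory.integral_const_mul, (if1_aux b q _ hb hq h1 h2).2, hk]
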